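/- Let (A, C) = σ(A', C') be a simple state in an AMG and D ⊆ 𝔻 a set of MTD defenses. Then T(P(C) ∩ N_∅) = T(P(C \ ⋃_{d∈D} δ(d)) ∩ N_∅): removing all nodes defended by defenses in D from C does not change the completed descendants of checkpoints. -/

import Mathlib

/-- An Attack-MTD DAG (AMG): nodes `N`, defenses `D`, an edge relation,
a root, a predicate marking subgoals (inner nodes), a refinement
(`conj g = True` means `∧`, `False` means `∨`), and for each defense the
set of nodes it defends. -/
structure AMG (N : Type) (D : Type) where
  edge : N → N → Prop
  root : N
  subgoal : N → Prop
  conj : N → Prop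
  defended : D → Set N

namespace AMG

variable {N D : Type} (T : AMG N D)

/-- One propagation step: add every subgoal whose refinement condition holds. -/
def step (M : Set N) : Set N :=
  M ∪ {g | T.subgoal g ∧
    ((T.conj g ∧ ∀ n, T.edge g n → n ∈ M) ∨ (¬ T.conj g ∧ ∃ n, T.edge g n ∧ n ∈ M))}

/-- Propagation operator: least fixed point of `step` above `C`. -/
def prop (C : Set N) : Set N := sInf {F | C ⊆ F ∧ T.step F = F}

/-- `l` is a directed path starting at the root and ending at a parent of `n`. -/
def rootPathTo (n : N) (l : List N) : Prop :=
  l.head? = some T.root ∧ List.Chain' T.edge l ∧ ∃ p, l.getLast? = some p ∧ T.edge p n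

/-- Completed descendants: nodes having at least one root-to-parent path, all of
whose root-to-parent paths meet `C`. -/
def cdesc (C : Set N) : Set N :=
  {n | (∃ l, T.rootPathTo n l) ∧ ∀ l, T.rootPathTo n l → ∃ g ∈ l, g ∈ C}

/-- Undefended nodes `N_∅`. -/
def undef : Set N := {n | ∀ d, n ∉ T.defended d}

/-- Pruning operator `R`. -/
def prune (s : Set N × Set N) : Set N × Set N :=
  (s.1 \ (T.cdesc (s.2 ∩ T.undef) ∪ s.2), s.2 \ T.cdesc (s.2 ∩ T.undef))

/-- Simple state `σ`. -/
def sstate (s : Set N × Set N) : Set N × Set N := T.prune (s.1, T.prop s.2)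

/-- Atomic attacks: the leaves of the DAG. -/
def atomic : Set N := {n | ∀ m, ¬ T.edge n m}

/-- Two states are equivalent iff they have the same simple state. -/
def stSetoid : Setoid (Set N × Set N) :=
  ⟨fun s t => T.sstate s = T.sstate t, ⟨fun _ => rfl, fun h => h.symm, fun h₁ h₂ => h₁.trans h₂⟩⟩

/-- Locations: equivalence classes of states. -/
def Loc := Quotient T.stSetoid

/-- Canonical representative of a location: the common simple state. -/
def rep (ℓ : T.Loc) : Set N × Set N :=
  Quotient.lift T.sstate (fun _ _ h => h) ℓ

/-- Set difference on locations: `ℓ \ (a, b)`. -/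
def locDiff (ℓ : T.Loc) (a b : Set N) : T.Loc :=
  Quotient.mk T.stSetoid ((T.rep ℓ).1 \ a, (T.rep ℓ).2 \ b)

/-- `d₂` follows `d₁` : `d₁ ▷ d₂`. -/
def follows (d₁ d₂ : D) : Prop :=
  ∃ n₁ ∈ T.defended d₁, ∃ n₂, T.edge n₁ n₂ ∧ n₂ ∉ T.defended d₁ ∧ n₂ ∈ T.defended d₂

end AMG


namespace AMG

variable {N D : Type} (T : AMG N D)

lemma step_mono' {M M' : Set N} (h : M ⊆ M') : T.step M ⊆ T.step M' := by
  intro g hg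
  rcases hg with hg | ⟨hsg, hor⟩
  · exact Or.inl (h hg)
  · refine Or.inr ⟨hsg, ?_⟩
    rcases hor with ⟨hc, hall⟩ | ⟨hc, x, hx, hxm⟩
    · exact Or.inl ⟨hc, fun n hn => h (hall n hn)⟩
    · exact Or.inr ⟨hc, x, hx, h hxm⟩

lemma subset_step' (M : Set N) : M ⊆ T.step M := fun _ hg => Or.inl hg

lemma prop_le' {C F : Set N} (hCF : C ⊆ F) (hF : T.step F = F) : T.prop C ⊆ F :=
  sInf_le ⟨hCF, hF⟩

lemma subset_prop' (C : Set N) : C ⊆ T.prop C :=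
  le_sInf fun _ hF => hF.1

lemma step_prop' (C : Set N) : T.step (T.prop C) = T.prop C := by
  refine le_antisymm ?_ (T.subset_step' _)
  exact le_sInf fun F hF =>
    le_trans (T.step_mono' (sInf_le hF)) (le_of_eq hF.2)

lemma prop_le_prop' {C C' : Set N} (h : C ⊆ T.prop C') : T.prop C ⊆ T.prop C' :=
  T.prop_le' h (T.step_prop' C')

lemma prop_mono' {C C' : Set N} (h : C ⊆ C') : T.prop C ⊆ T.prop C' :=
  T.prop_le_prop' (h.trans (T.subset_prop' C'))

lemma cdesc_mono' {Y Y' : Set N} (h : Y ⊆ Y') : T.cdesc Y ⊆ T.cdesc Y' := by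
  intro n hn
  refine ⟨hn.1, fun l hl => ?_⟩
  obtain ⟨g, hgl, hgY⟩ := hn.2 l hl
  exact ⟨g, hgl, h hgY⟩

lemma mem_of_head?_eq {l : List N} {a : N} (h : l.head? = some a) : a ∈ l := by
  cases l with
  | nil => simp at h
  | cons b t => simp_all

/-- The descent lemma: if the root is not in `KU` and every element of `KU`
not in `cdesc KU` lies in `BX`, then every root path hitting `KU` hits `BX`. -/
lemma descend (KU BX : Set N)
    (hKU : ∀ g, g ∈ KU → g ∉ T.cdesc KU → g ∈ BX)
    (hroot : T.root ∉ KU) :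
    ∀ k (l : List N), l.length ≤ k → l.head? = some T.root →
      l.Chain' T.edge → (∃ g ∈ l, g ∈ KU) → ∃ b ∈ l, b ∈ BX := by
  intro k
  induction k with
  | zero =>
    intro l hlen hhead _ _
    cases l with
    | nil => simp at hhead
    | cons a t => simp at hlen
  | succ k ih =>
    intro l hlen hhead hchain ⟨g, hgl, hgKU⟩
    by_cases hgE : g ∈ T.cdesc KU
    · obtain ⟨s, t, rfl⟩ := List.append_of_mem hgl
      cases s with
      | nil =>
        simp only [List.nil_append, List.head?_cons, Option.some.injEq] at hhead
        exact absurd (hhead ▸ hgKU) hroot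
      | cons a s' =>
        have hhead' : (a :: s').head? = some T.root := by
          simpa using hhead
        rw [List.Chain', List.isChain_append] at hchain
        obtain ⟨hch1, _, hch3⟩ := hchain
        obtain ⟨p, hp⟩ : ∃ p, (a :: s').getLast? = some p := by
          cases hq : (a :: s').getLast? with
          | none => simp [List.getLast?_eq_none_iff] at hq
          | some p => exact ⟨p, rfl⟩
        have hpg : T.edge p g := hch3 p hp g rfl
        have hpath : T.rootPathTo g (a :: s') := ⟨hhead', hch1, p, hp, hpg⟩
        obtain ⟨b, hbs, hbKU⟩ := hgE.2 _ hpath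
        have hlen' : (a :: s').length ≤ k := by
          have := hlen
          simp only [List.length_append, List.length_cons] at this ⊢
          omega
        obtain ⟨c, hcs, hcBX⟩ := ih (a :: s') hlen' hhead' hch1 ⟨b, hbs, hbKU⟩
        exact ⟨c, List.mem_append_left _ hcs, hcBX⟩
    · exact ⟨g, hgl, hKU g hgKU hgE⟩

end AMG

/-- If `(A, C) = σ (A', C')` is a simple state and `Ds` is a set of defenses, then
removing all nodes defended by defenses in `Ds` from `C` does not change the
completed descendants of the checkpoints:
`T(P(C) ∩ N_∅) = T(P(C \ ⋃_{d ∈ Ds} δ(d)) ∩ N_∅)`. -/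
theorem stmt8 {N D : Type} (T : AMG N D) (A' C' A C : Set N) (Ds : Set D)
    (h : (A, C) = T.sstate (A', C')) :
    T.cdesc (T.prop C ∩ T.undef) =
      T.cdesc (T.prop (C \ ⋃ d ∈ Ds, T.defended d) ∩ T.undef) := by
  classical
  -- Notation
  set S : Set N := ⋃ d ∈ Ds, T.defended d with hS
  have hC : C = T.prop C' \ T.cdesc (T.prop C' ∩ T.undef) := congrArg Prod.snd h
  set K : Set N := T.prop C' with hK
  set U : Set N := T.undef with hU
  -- basic facts
  have hSU : ∀ x ∈ S, x ∉ U := by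
    intro x hx hxU
    obtain ⟨s, ⟨d, rfl⟩, hxs⟩ := hx
    simp only [Set.mem_iUnion] at hxs
    obtain ⟨hd, hxd⟩ := hxs
    exact hxU d hxd
  have hCK : C ⊆ K := by rw [hC]; exact Set.diff_subset
  have hpropCK : T.prop C ⊆ K := T.prop_le_prop' (hC ▸ Set.diff_subset)
  have hXC : T.prop (C \ S) ⊆ T.prop C := T.prop_mono' Set.diff_subset
  have hKUE : ∀ g, g ∈ K ∩ U → g ∉ T.cdesc (K ∩ U) → g ∈ T.prop (C \ S) ∩ U := by
    intro g hg hgE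
    have hgC : g ∈ C := by rw [hC]; exact ⟨hg.1, hgE⟩
    have hgS : g ∉ S := fun hs => hSU g hs hg.2
    exact ⟨T.subset_prop' _ ⟨hgC, hgS⟩, hg.2⟩
  refine le_antisymm ?_ (T.cdesc_mono' (Set.inter_subset_inter_left _ hXC))
  by_cases hr : T.root ∈ K ∩ U
  · -- root in K ∩ U: every reachable node is a completed descendant, C is unreachable
    apply T.cdesc_mono'
    intro g hg
    set Reach : Set N := {n | ∃ l, T.rootPathTo n l} with hReach
    have hreach_child : ∀ n ∈ Reach, ∀ m, T.edge n m → m ∈ Reach := by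
      rintro n ⟨l, hhead, hchain, p, hlast, hpn⟩ m hnm
      refine ⟨l ++ [n], ?_, ?_, n, by simp, hnm⟩
      · cases l with
        | nil => simp at hhead
        | cons a t => simpa using hhead
      · rw [List.Chain', List.isChain_append]
        exact ⟨hchain, List.isChain_singleton n, fun x hx y hy => by
          simp only [List.head?_cons, Option.mem_def, Option.some.injEq] at hy
          subst hy
          rw [hlast] at hx
          cases hx
          exact hpn⟩
    have hCreach : ∀ c ∈ C, c ∉ Reach := by
      rintro c hc ⟨l, hl⟩
      rw [hC] at hc
      exact hc.2 ⟨⟨l, hl⟩, fun l' hl' =>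
        ⟨T.root, AMG.mem_of_head?_eq hl'.1, hr⟩⟩
    -- the closure W
    set W : Set N := (T.prop C \ Reach) ∪ T.prop ∅ with hW
    have hWsub : W ⊆ T.prop C :=
      Set.union_subset Set.diff_subset (T.prop_mono' (Set.empty_subset _))
    have hstepW : T.step W = W := by
      refine le_antisymm ?_ (T.subset_step' _)
      intro x hx
      rcases hx with hx | ⟨hsg, hor⟩
      · exact hx
      · have hxpropC : x ∈ T.prop C := by
          rw [← T.step_prop' C]
          refine Or.inr ⟨hsg, ?_⟩
          rcases hor with ⟨hc, hall⟩ | ⟨hc, y, hy, hym⟩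
          · exact Or.inl ⟨hc, fun n hn => hWsub (hall n hn)⟩
          · exact Or.inr ⟨hc, y, hy, hWsub hym⟩
        by_cases hxR : x ∈ Reach
        · have hx0 : x ∈ T.step (T.prop ∅) := by
            refine Or.inr ⟨hsg, ?_⟩
            have hchild : ∀ m ∈ W, T.edge x m → m ∈ T.prop ∅ := by
              intro m hm hxm
              rcases hm with hm | hm
              · exact absurd (hreach_child x hxR m hxm) hm.2
              · exact hm
            rcases hor with ⟨hc, hall⟩ | ⟨hc, y, hy, hym⟩
            · exact Or.inl ⟨hc, fun n hn => hchild n (hall n hn) hn⟩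
            · exact Or.inr ⟨hc, y, hy, hchild y hym hy⟩
          rw [T.step_prop'] at hx0
          exact Or.inr hx0
        · exact Or.inl ⟨hxpropC, hxR⟩
    have hCW : C ⊆ W := fun c hc =>
      Or.inl ⟨T.subset_prop' _ hc, hCreach c hc⟩
    have hpropCW : T.prop C ⊆ W := T.prop_le' hCW hstepW
    -- conclude prop C ∩ U ⊆ prop (C \ S) ∩ U
    rcases hpropCW hg.1 with hgw | hgw
    · -- g not reachable, hence not in E, hence in C ∩ U
      have hgE : g ∉ T.cdesc (K ∩ U) := fun hE => hgw.2 hE.1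
      exact hKUE g ⟨hpropCK hg.1, hg.2⟩ hgE
    · exact ⟨T.prop_mono' (Set.empty_subset _) hgw, hg.2⟩
  · -- root not in K ∩ U: descent argument
    intro n hn
    refine ⟨hn.1, fun l hl => ?_⟩
    obtain ⟨g, hgl, hgB⟩ := hn.2 l hl
    exact T.descend (K ∩ U) (T.prop (C \ S) ∩ U) hKUE hr
      l.length l le_rfl hl.1 hl.2.1 ⟨g, hgl, hpropCK hgB.1, hgB.2⟩
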